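/- Let C be a d-uniform clutter with a perfect matching whose set covering polyhedron Q(A) is integral. Then the number of vertices of C equals d·α₀(C), where α₀(C) is the vertex covering number. -/

import Mathlib

open Finset

/-- A clutter on vertex set `Fin n`: a family of nonempty edges, none contained in another. -/
structure Clutter (n : ℕ) where
  edges : Finset (Finset (Fin n))
  nonempty_edges : ∀ e ∈ edges, e.Nonempty
  antichain : ∀ e ∈ edges, ∀ f ∈ edges, e ⊆ f → e = f

namespace Clutter

variable {n : ℕ}

/-- `C` is `d`-uniform: every edge has exactly `d` vertices. -/
def Uniform (C : Clutter n) (d : ℕ) : Prop := ∀ e ∈ C.edges, e.card = d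

/-- `S` is a vertex cover of `C`. -/
def IsCover (C : Clutter n) (S : Finset (Fin n)) : Prop := ∀ e ∈ C.edges, (e ∩ S).Nonempty

/-- `S` is a minimal vertex cover of `C`. -/
def IsMinCover (C : Clutter n) (S : Finset (Fin n)) : Prop :=
  C.IsCover S ∧ ∀ T ⊆ S, C.IsCover T → T = S

/-- The vertex covering number `α₀(C)`. -/
noncomputable def coverNumber (C : Clutter n) : ℕ :=
  sInf {k | ∃ S : Finset (Fin n), C.IsCover S ∧ S.card = k}

/-- The edge independence (matching) number `β₁(C)`. -/
noncomputable def matchNumber (C : Clutter n) : ℕ :=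
  sSup {k | ∃ M : Finset (Finset (Fin n)), M ⊆ C.edges ∧
    (∀ e ∈ M, ∀ f ∈ M, e ≠ f → Disjoint e f) ∧ M.card = k}

/-- `C` has a perfect matching: pairwise disjoint edges covering all vertices. -/
def HasPerfectMatching (C : Clutter n) : Prop :=
  ∃ M : Finset (Finset (Fin n)), M ⊆ C.edges ∧
    (∀ e ∈ M, ∀ f ∈ M, e ≠ f → Disjoint e f) ∧ (∀ i : Fin n, ∃ e ∈ M, i ∈ e)

/-- The set covering polyhedron `Q(A) = {x : x ≥ 0, xA ≥ 1}`. -/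
def QA (C : Clutter n) : Set (Fin n → ℝ) :=
  {x | (∀ i, 0 ≤ x i) ∧ ∀ e ∈ C.edges, 1 ≤ ∑ i ∈ e, x i}

/-- `Q(A)` is an integral polyhedron: all its vertices (extreme points) are integral. -/
def QAIntegral (C : Clutter n) : Prop :=
  ∀ x ∈ Set.extremePoints ℝ C.QA, ∀ i, ∃ z : ℤ, x i = (z : ℝ)

/-- Deletion of a vertex: remove `v` and all edges through it. -/
def delete (C : Clutter n) (v : Fin n) : Clutter n where
  edges := C.edges.filter (fun e => v ∉ e)
  nonempty_edges := fun e he => C.nonempty_edges e (mem_filter.mp he).1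
  antichain := fun e he f hf hef =>
    C.antichain e (mem_filter.mp he).1 f (mem_filter.mp hf).1 hef

/-- The edges of the minor of `C` obtained by deleting the vertices in `D`
(setting them to `0`) and contracting the vertices in `U` (setting them to `1`):
the minimal nonempty sets of the form `e \ U` with `e` an edge disjoint from `D`. -/
def minorEdges (C : Clutter n) (D U : Finset (Fin n)) : Finset (Finset (Fin n)) :=
  ((C.edges.filter (fun e => Disjoint e D)).image (fun e => e \ U)).filter
    (fun e => e.Nonempty ∧
      ∀ f ∈ (C.edges.filter (fun e => Disjoint e D)).image (fun e => e \ U),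
        f.Nonempty → f ⊆ e → f = e)

/-- The minor of `C` determined by deleting `D` and contracting `U`. -/
def minor (C : Clutter n) (D U : Finset (Fin n)) : Clutter n where
  edges := C.minorEdges D U
  nonempty_edges := fun e he => ((mem_filter.mp he).2).1
  antichain := fun e he f hf hef =>
    ((mem_filter.mp hf).2).2 e (mem_filter.mp he).1 ((mem_filter.mp he).2).1 hef

/-- The König property: `α₀(C) = β₁(C)`. -/
def HasKonig (C : Clutter n) : Prop := C.coverNumber = C.matchNumber

/-- The packing property: every (proper) minor of `C` has the König property. -/
def PackingProperty (C : Clutter n) : Prop :=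
  ∀ D U : Finset (Fin n), Disjoint D U →
    (∀ e ∈ C.edges, Disjoint e D → ¬ e ⊆ U) → (C.minor D U).HasKonig

/-- The max-flow min-cut property: for every nonnegative integral `α` the LP
`min{⟨α,x⟩ : x ≥ 0, xA ≥ 1}` and its dual `max{⟨y,1⟩ : y ≥ 0, Ay ≤ α}` both have
integral optimum solutions (expressed via a pair of integral feasible solutions
with equal objective values, which are then optimal by LP duality). -/
def HasMFMC (C : Clutter n) : Prop :=
  ∀ α : Fin n → ℕ,
    ∃ (x : Fin n → ℕ) (y : Finset (Fin n) → ℕ),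
      (∀ e ∈ C.edges, 1 ≤ ∑ i ∈ e, x i) ∧
      (∀ e, e ∉ C.edges → y e = 0) ∧
      (∀ i : Fin n, ∑ e ∈ C.edges.filter (fun e => i ∈ e), y e ≤ α i) ∧
      (∑ i, α i * x i = ∑ e ∈ C.edges, y e)

/-- The incidence matrix of `C`, with columns indexed by the edges. -/
def inc (C : Clutter n) : Matrix (Fin n) {e // e ∈ C.edges} ℤ :=
  Matrix.of fun i e => if i ∈ e.1 then 1 else 0

end Clutter

/-- `Δ_r(A) = 1`: the gcd of all nonzero `r × r` subdeterminants of `A` is `1`,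
i.e. every common divisor of them is a unit. -/
def DeltaOne {m m' : Type*} [Fintype m] [Fintype m'] (A : Matrix m m' ℤ) (r : ℕ) : Prop :=
  ∀ k : ℤ, (∀ (f : Fin r → m) (g : Fin r → m'), Function.Injective f → Function.Injective g →
    (A.submatrix f g).det ≠ 0 → k ∣ (A.submatrix f g).det) → IsUnit k


section Aux

open Finset Set

variable {n : ℕ}

lemma qa_isClosed (C : Clutter n) : IsClosed C.QA := by
  have : C.QA = (⋂ i, {x : Fin n → ℝ | 0 ≤ x i}) ∩
      ⋂ e ∈ C.edges, {x : Fin n → ℝ | 1 ≤ ∑ i ∈ e, x i} := by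
    ext x
    simp [Clutter.QA, Set.mem_iInter]
  rw [this]
  refine IsClosed.inter (isClosed_iInter fun i => isClosed_le continuous_const
    (continuous_apply i)) (isClosed_biInter fun e _ => isClosed_le continuous_const
    (continuous_finset_sum _ fun i _ => continuous_apply i))

lemma cover_lower (C : Clutter n) (M : Finset (Finset (Fin n))) (hM : M ⊆ C.edges)
    (hdisj : ∀ e ∈ M, ∀ f ∈ M, e ≠ f → Disjoint e f)
    (T : Finset (Fin n)) (hT : C.IsCover T) : M.card ≤ T.card := by
  calc M.card = ∑ _e ∈ M, 1 := by simp
    _ ≤ ∑ e ∈ M, (e ∩ T).card := by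
        refine Finset.sum_le_sum fun e he => ?_
        exact Finset.card_pos.mpr (hT e (hM he))
    _ = (M.biUnion (fun e => e ∩ T)).card := by
        rw [Finset.card_biUnion]
        intro e he f hf hef
        exact (hdisj e he f hf hef).mono inter_subset_left inter_subset_left
    _ ≤ T.card := Finset.card_le_card (by
        intro x hx
        obtain ⟨e, _, hx⟩ := Finset.mem_biUnion.mp hx
        exact (Finset.mem_inter.mp hx).2)

end Aux


/-- If `C` is a `d`-uniform clutter with a perfect matching whose set
covering polyhedron `Q(A)` is integral, then the number of vertices equals `d · α₀(C)`. -/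
theorem stmt2 {n d : ℕ} (C : Clutter n) (hC : C.Uniform d)
    (hpm : C.HasPerfectMatching) (hQ : C.QAIntegral) :
    n = d * C.coverNumber := by
  classical
  obtain ⟨M, hME, hMdisj, hMcov⟩ := hpm
  -- n = d * M.card
  have hunion : (M.biUnion fun e => e) = Finset.univ := by
    ext i
    simp only [Finset.mem_biUnion, Finset.mem_univ, iff_true]
    exact hMcov i
  have hn : n = d * M.card := by
    have h1 : (M.biUnion fun e => e).card = ∑ u ∈ M, u.card :=
      Finset.card_biUnion (fun e he f hf hef => hMdisj e he f hf hef)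
    rw [hunion, Finset.card_univ, Fintype.card_fin] at h1
    calc n = ∑ u ∈ M, u.card := h1
      _ = ∑ _u ∈ M, d := Finset.sum_congr rfl fun e he => hC e (hME he)
      _ = M.card * d := by rw [Finset.sum_const, smul_eq_mul]
      _ = d * M.card := mul_comm _ _
  -- reduce to coverNumber = M.card
  suffices hcn : C.coverNumber = M.card by rw [hcn]; exact hn
  -- lower bound for all covers
  have hlow : ∀ T : Finset (Fin n), C.IsCover T → M.card ≤ T.card :=
    fun T hT => cover_lower C M hME hMdisj T hT
  -- case split on edges empty
  by_cases hE : C.edges = ∅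
  · have hM0 : M = ∅ := Finset.subset_empty.mp (hE ▸ hME)
    have : C.coverNumber = 0 := by
      have : (0 : ℕ) ∈ {k | ∃ S : Finset (Fin n), C.IsCover S ∧ S.card = k} :=
        ⟨∅, fun e he => absurd he (by simp [hE]), rfl⟩
      exact Nat.le_zero.mp (Nat.sInf_le this)
    rw [this, hM0, Finset.card_empty]
  -- d ≥ 1
  have hd : 0 < d := by
    obtain ⟨e, he⟩ := Finset.nonempty_iff_ne_empty.mpr hE
    rw [← hC e he]
    exact Finset.card_pos.mpr (C.nonempty_edges e he)
  have hdR : (0:ℝ) < d := by exact_mod_cast hd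
  -- the feasible point x0 = 1/d
  set x0 : Fin n → ℝ := fun _ => 1 / d with hx0def
  have hx0 : x0 ∈ C.QA := by
    constructor
    · intro i; positivity
    · intro e he
      rw [Finset.sum_const, hC e he]
      rw [nsmul_eq_mul]
      rw [mul_one_div, div_self (ne_of_gt hdR)]
  have hx0sum : ∑ i, x0 i = (M.card : ℝ) := by
    rw [Finset.sum_const, Finset.card_univ, Fintype.card_fin, nsmul_eq_mul]
    have hnR : (n:ℝ) = d * M.card := by exact_mod_cast hn
    rw [hnR]
    field_simp
  -- the compact truncation K
  set c : ℝ := (M.card : ℝ) with hcdef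
  set K : Set (Fin n → ℝ) := C.QA ∩ {x | ∑ i, x i ≤ c} with hKdef
  have hsum_cont : Continuous (fun x : Fin n → ℝ => ∑ i, x i) :=
    continuous_finset_sum _ fun i _ => continuous_apply i
  have hbound : ∀ x ∈ C.QA, ∀ b : ℝ, ∑ i, x i ≤ b → x ∈ Set.Icc (fun _ => (0:ℝ)) (fun _ => b) := by
    intro x hx b hb
    constructor
    · intro i; exact hx.1 i
    · intro i
      calc x i ≤ ∑ j, x j := Finset.single_le_sum (fun j _ => hx.1 j) (Finset.mem_univ i)
        _ ≤ b := hb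
  have hKcomp : IsCompact K := by
    refine IsCompact.of_isClosed_subset
      (isCompact_Icc (a := fun _ => (0:ℝ)) (b := fun _ => c))
      ((qa_isClosed C).inter (isClosed_le hsum_cont continuous_const)) ?_
    intro x hx
    exact hbound x hx.1 c hx.2
  have hKne : K.Nonempty := ⟨x0, hx0, le_of_eq hx0sum⟩
  obtain ⟨xm, hxmK, hxmmin⟩ := hKcomp.exists_isMinOn hKne hsum_cont.continuousOn
  set μ : ℝ := ∑ i, xm i with hμdef
  -- xm is a global minimizer over QA
  have hglob : ∀ y ∈ C.QA, μ ≤ ∑ i, y i := by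
    intro y hy
    by_cases hyc : ∑ i, y i ≤ c
    · exact hxmmin ⟨hy, hyc⟩
    · calc μ ≤ ∑ i, x0 i := hxmmin ⟨hx0, le_of_eq hx0sum⟩
        _ = c := hx0sum
        _ ≤ ∑ i, y i := le_of_not_ge hyc
  have hμc : μ ≤ c := hxmK.2
  -- the face F
  set F : Set (Fin n → ℝ) := {x ∈ C.QA | ∑ i, x i = μ} with hFdef
  have hFne : F.Nonempty := ⟨xm, hxmK.1, rfl⟩
  have hFclosed : IsClosed F :=
    (qa_isClosed C).inter (isClosed_eq hsum_cont continuous_const)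
  have hFcomp : IsCompact F := by
    refine IsCompact.of_isClosed_subset
      (isCompact_Icc (a := fun _ => (0:ℝ)) (b := fun _ => μ)) hFclosed ?_
    intro x hx
    exact hbound x hx.1 μ (le_of_eq hx.2)
  have hext : IsExtreme ℝ C.QA F := by
    constructor
    · intro x hx; exact hx.1
    · intro x1 hx1 x2 hx2 x hxF hseg
      obtain ⟨a, b, ha, hb, hab, hx⟩ := hseg
      have hs1 : μ ≤ ∑ i, x1 i := hglob x1 hx1
      have hs2 : μ ≤ ∑ i, x2 i := hglob x2 hx2
      have hsum : a * (∑ i, x1 i) + b * (∑ i, x2 i) = μ := by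
        rw [← hxF.2, ← hx]
        simp [Finset.mul_sum, Finset.sum_add_distrib]
      have h1 : ∑ i, x1 i = μ := by nlinarith
      have h2 : ∑ i, x2 i = μ := by nlinarith
      exact ⟨hx1, h1⟩
  obtain ⟨z, hzF⟩ := hFcomp.extremePoints_nonempty hFne
  have hzQA : z ∈ Set.extremePoints ℝ C.QA := hext.extremePoints_subset_extremePoints hzF
  have hzint := hQ z hzQA
  have hzmem : z ∈ C.QA := hzQA.1
  have hzsum : ∑ i, z i = μ := hzF.1.2
  -- each coordinate is 0 or ≥ 1
  have hz01 : ∀ i, z i = 0 ∨ 1 ≤ z i := by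
    intro i
    obtain ⟨k, hk⟩ := hzint i
    rcases lt_or_ge (z i) 1 with h | h
    · left
      have h0 : (0:ℤ) ≤ k := by
        have := hzmem.1 i; rw [hk] at this; exact_mod_cast this
      have h1 : k < 1 := by
        rw [hk] at h; exact_mod_cast h
      have : k = 0 := by omega
      rw [hk, this, Int.cast_zero]
    · right; exact h
  set S : Finset (Fin n) := Finset.univ.filter (fun i => 1 ≤ z i) with hSdef
  have hScover : C.IsCover S := by
    intro e he
    by_contra hcon
    have hzero : ∀ i ∈ e, z i = 0 := by
      intro i hi
      rcases hz01 i with h | h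
      · exact h
      · exact absurd ⟨i, Finset.mem_inter.mpr ⟨hi, Finset.mem_filter.mpr
          ⟨Finset.mem_univ i, h⟩⟩⟩ hcon
    have : (1:ℝ) ≤ ∑ i ∈ e, z i := hzmem.2 e he
    rw [Finset.sum_eq_zero hzero] at this
    linarith
  have hScard : (S.card : ℝ) ≤ c := by
    calc (S.card : ℝ) = ∑ _i ∈ S, (1:ℝ) := by simp
      _ ≤ ∑ i ∈ S, z i := Finset.sum_le_sum fun i hi => (Finset.mem_filter.mp hi).2
      _ ≤ ∑ i, z i := Finset.sum_le_sum_of_subset_of_nonneg (Finset.subset_univ S)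
          (fun i _ _ => hzmem.1 i)
      _ = μ := hzsum
      _ ≤ c := hμc
  have hScardN : S.card ≤ M.card := by
    rw [hcdef] at hScard; exact_mod_cast hScard
  have hSeq : S.card = M.card := le_antisymm hScardN (hlow S hScover)
  -- conclude
  have hmem : M.card ∈ {k | ∃ T : Finset (Fin n), C.IsCover T ∧ T.card = k} :=
    ⟨S, hScover, hSeq⟩
  refine le_antisymm (Nat.sInf_le hmem) ?_
  obtain ⟨T, hTc, hTcard⟩ := Nat.sInf_mem (Set.nonempty_of_mem hmem)
  rw [Clutter.coverNumber, ← hTcard]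
  exact hlow T hTc
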